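/- Let A be a Banach algebra and I a closed two-sided ideal of A. If the quotient Banach algebra A/I is approximately cyclic amenable, then I has the approximate trace extension property. -/

import Mathlib

open Filter Topology

noncomputable section

universe u v

variable {A : Type u} [NonUnitalNormedRing A] [NormedSpace ℂ A]
  [IsScalarTower ℂ A A] [SMulCommClass ℂ A A]

/-- The left module action of `A` on its dual `A*`: `(a · f) b = f (b * a)`. -/
def lAct (a : A) (f : A →L[ℂ] ℂ) : A →L[ℂ] ℂ :=
  f.comp ((ContinuousLinearMap.mul ℂ A).flip a)

/-- The right module action of `A` on its dual `A*`: `(f · a) b = f (a * b)`. -/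
def rAct (f : A →L[ℂ] ℂ) (a : A) : A →L[ℂ] ℂ :=
  f.comp (ContinuousLinearMap.mul ℂ A a)

/-- A bounded linear `D : A → A*` is a derivation if `D (a * b) = D a · b + a · D b`. -/
def IsDerivation (D : A →L[ℂ] (A →L[ℂ] ℂ)) : Prop :=
  ∀ a b : A, D (a * b) = rAct (D a) b + lAct a (D b)

/-- A derivation `D : A → A*` is cyclic if `⟨D a, b⟩ + ⟨D b, a⟩ = 0` for all `a, b`. -/
def IsCyclicDeriv (D : A →L[ℂ] (A →L[ℂ] ℂ)) : Prop :=
  ∀ a b : A, D a b + D b a = 0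

/-- `D : A → A*` is approximately inner if there is a net `(f i)` in `A*` with
`D a = lim_i (a · f i - f i · a)` in norm, for every `a ∈ A`. -/
def IsApproxInner {A : Type u} [NonUnitalNormedRing A] [NormedSpace ℂ A]
    [IsScalarTower ℂ A A] [SMulCommClass ℂ A A] (D : A →L[ℂ] (A →L[ℂ] ℂ)) : Prop :=
  ∃ (ι : Type u) (l : Filter ι) (f : ι → (A →L[ℂ] ℂ)), l.NeBot ∧
    ∀ a : A, Tendsto (fun i => lAct a (f i) - rAct (f i) a) l (𝓝 (D a))

/-- `D : A → A*` is inner if `D a = a · f - f · a` for some fixed `f ∈ A*`. -/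
def IsInner (D : A →L[ℂ] (A →L[ℂ] ℂ)) : Prop :=
  ∃ f : A →L[ℂ] ℂ, ∀ a : A, D a = lAct a f - rAct f a

/-- A Banach algebra is approximately cyclic amenable if every cyclic bounded
derivation `D : A → A*` is approximately inner. -/
def ApproxCyclicAmenable (A : Type u) [NonUnitalNormedRing A] [NormedSpace ℂ A]
    [IsScalarTower ℂ A A] [SMulCommClass ℂ A A] : Prop :=
  ∀ D : A →L[ℂ] (A →L[ℂ] ℂ), IsDerivation D → IsCyclicDeriv D → IsApproxInner D

/-- A Banach algebra is cyclic amenable if every cyclic bounded derivation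
`D : A → A*` is inner. -/
def CyclicAmenable (A : Type u) [NonUnitalNormedRing A] [NormedSpace ℂ A]
    [IsScalarTower ℂ A A] [SMulCommClass ℂ A A] : Prop :=
  ∀ D : A →L[ℂ] (A →L[ℂ] ℂ), IsDerivation D → IsCyclicDeriv D → IsInner D

/-- A closed two-sided ideal `I` of `A` has the approximate trace extension property if every
`f ∈ I*` with `a · f = f · a` for all `a ∈ A` admits a net `(g i)` in `A*` with
`g i |_I = f` for all `i` and `a · g i - g i · a → 0` in norm for every `a ∈ A`. -/
def HasApproxTraceExt {A : Type u} [NonUnitalNormedRing A] [NormedSpace ℂ A]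
    [IsScalarTower ℂ A A] [SMulCommClass ℂ A A] (I : Submodule ℂ A)
    (hr : ∀ (a : A), ∀ x ∈ I, x * a ∈ I) (hl : ∀ (a : A), ∀ x ∈ I, a * x ∈ I) : Prop :=
  ∀ f : ↥I →L[ℂ] ℂ,
    (∀ (a : A) (x : ↥I), f ⟨a * (x : A), hl a x x.2⟩ = f ⟨(x : A) * a, hr a x x.2⟩) →
    ∃ (ι : Type u) (l : Filter ι) (g : ι → (A →L[ℂ] ℂ)), l.NeBot ∧
      (∀ i, ∀ x : ↥I, g i (x : A) = f x) ∧
      (∀ a : A, Tendsto (fun i => lAct a (g i) - rAct (g i) a) l (𝓝 0))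

set_option maxHeartbeats 2000000 in
/-- If the quotient `A/I` of a Banach algebra `A` by a closed two-sided
ideal `I` is approximately cyclic amenable, then `I` has the approximate trace extension
property.  (The quotient is represented by a Banach algebra `Q` together with a surjective
continuous multiplicative linear map `π : A → Q` with kernel `I` and the quotient norm.) -/
theorem hasApproxTraceExt_of_quotient_approxCyclicAmenable
    {A : Type u} {Q : Type v} [NonUnitalNormedRing A] [NormedSpace ℂ A]
    [IsScalarTower ℂ A A] [SMulCommClass ℂ A A] [CompleteSpace A]
    [NonUnitalNormedRing Q] [NormedSpace ℂ Q]
    [IsScalarTower ℂ Q Q] [SMulCommClass ℂ Q Q] [CompleteSpace Q]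
    (I : Submodule ℂ A) (hclosed : IsClosed (I : Set A))
    (hr : ∀ (a : A), ∀ x ∈ I, x * a ∈ I) (hl : ∀ (a : A), ∀ x ∈ I, a * x ∈ I)
    (π : A →L[ℂ] Q) (hmul : ∀ x y : A, π (x * y) = π x * π y)
    (hsurj : Function.Surjective π) (hker : ∀ a : A, π a = 0 ↔ a ∈ I)
    (hnorm : ∀ q : Q, ‖q‖ = sInf (norm '' (π ⁻¹' {q})))
    (hQ : ApproxCyclicAmenable Q) :
    HasApproxTraceExt I hr hl := by
  intro f hf
  -- Extend f to a functional F on A by Hahn–Banach.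
  obtain ⟨F, hF, -⟩ := exists_extension_norm_eq I f
  -- The bilinear form W a b = F (b*a) - F (a*b).
  set W : A → A → ℂ := fun a b => F (b * a) - F (a * b) with hW
  have hWR : ∀ (a x : A), x ∈ I → W a x = 0 := by
    intro a x hx
    have h1 := hF ⟨x * a, hr a x hx⟩
    have h2 := hF ⟨a * x, hl a x hx⟩
    have h3 := hf a ⟨x, hx⟩
    simp only [hW]
    rw [show F (x * a) = F ((⟨x * a, hr a x hx⟩ : ↥I) : A) from rfl, h1,
      show F (a * x) = F ((⟨a * x, hl a x hx⟩ : ↥I) : A) from rfl, h2]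
    rw [show (⟨a * x, hl a x hx⟩ : ↥I) = ⟨a * ((⟨x, hx⟩ : ↥I) : A), hl a _ hx⟩ from rfl] at *
    rw [h3]
    rw [sub_eq_zero]
  have hWL : ∀ (x b : A), x ∈ I → W x b = 0 := by
    intro x b hx
    have h1 := hF ⟨b * x, hl b x hx⟩
    have h2 := hF ⟨x * b, hr b x hx⟩
    have h3 := hf b ⟨x, hx⟩
    simp only [hW]
    rw [show F (b * x) = F ((⟨b * x, hl b x hx⟩ : ↥I) : A) from rfl, h1,
      show F (x * b) = F ((⟨x * b, hr b x hx⟩ : ↥I) : A) from rfl, h2]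
    rw [show (⟨b * x, hl b x hx⟩ : ↥I) = ⟨b * ((⟨x, hx⟩ : ↥I) : A), hl b _ hx⟩ from rfl] at *
    rw [h3]
    rw [sub_eq_zero]
  -- Bilinearity of W
  have hWadd1 : ∀ a a' b : A, W (a + a') b = W a b + W a' b := by
    intro a a' b; simp only [hW, mul_add, add_mul, map_add]; ring
  have hWadd2 : ∀ a b b' : A, W a (b + b') = W a b + W a b' := by
    intro a b b'; simp only [hW, mul_add, add_mul, map_add]; ring
  have hWsmul1 : ∀ (c : ℂ) (a b : A), W (c • a) b = c * W a b := by
    intro c a b; simp only [hW, mul_smul_comm, smul_mul_assoc, map_smul, smul_eq_mul]; ring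
  have hWsmul2 : ∀ (c : ℂ) (a b : A), W a (c • b) = c * W a b := by
    intro c a b; simp only [hW, mul_smul_comm, smul_mul_assoc, map_smul, smul_eq_mul]; ring
  -- W only depends on the classes mod I.
  have hWπ : ∀ a a' b b' : A, π a = π a' → π b = π b' → W a b = W a' b' := by
    intro a a' b b' ha hb
    have hIa : a - a' ∈ I := (hker _).mp (by rw [map_sub, ha, sub_self])
    have hIb : b - b' ∈ I := (hker _).mp (by rw [map_sub, hb, sub_self])
    have e1 : W a b = W (a' + (a - a')) b := by rw [add_sub_cancel]
    rw [e1, hWadd1, hWL _ _ hIa, add_zero,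
      show b = b' + (b - b') by rw [add_sub_cancel], hWadd2, hWR _ _ hIb, add_zero]
  -- norm bound for W
  have hFnn : (0:ℝ) ≤ ‖F‖ := norm_nonneg _
  have hWbound : ∀ a b : A, ‖W a b‖ ≤ 2 * ‖F‖ * ‖a‖ * ‖b‖ := by
    intro a b
    have h1 : ‖F (b * a)‖ ≤ ‖F‖ * ‖b * a‖ := F.le_opNorm _
    have h2 : ‖F (a * b)‖ ≤ ‖F‖ * ‖a * b‖ := F.le_opNorm _
    have h3 : ‖b * a‖ ≤ ‖b‖ * ‖a‖ := norm_mul_le _ _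
    have h4 : ‖a * b‖ ≤ ‖a‖ * ‖b‖ := norm_mul_le _ _
    have h5 : ‖W a b‖ ≤ ‖F (b * a)‖ + ‖F (a * b)‖ := norm_sub_le _ _
    nlinarith [norm_nonneg a, norm_nonneg b, norm_nonneg (F (b*a)), norm_nonneg (F (a*b))]
  -- near-optimal representatives
  have hrep : ∀ (q : Q) (δ : ℝ), 0 < δ → ∃ a : A, π a = q ∧ ‖a‖ < ‖q‖ + δ := by
    intro q δ hδ
    obtain ⟨a0, ha0⟩ := hsurj q
    have hne : (norm '' (π ⁻¹' {q})).Nonempty := ⟨‖a0‖, a0, by simp [ha0], rfl⟩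
    obtain ⟨m, ⟨a, ha, rfl⟩, hm⟩ := Real.lt_sInf_add_pos hne hδ
    exact ⟨a, ha, by rw [hnorm q]; exact hm⟩
  -- a fixed section of π
  set σ : Q → A := Function.surjInv hsurj with hσdef
  have hσ : ∀ q : Q, π (σ q) = q := fun q => Function.surjInv_eq hsurj q
  -- the bilinear map B on Q
  set B : Q →ₗ[ℂ] Q →ₗ[ℂ] ℂ := LinearMap.mk₂ ℂ (fun q r => W (σ q) (σ r))
    (fun q q' r => by
      rw [hWπ (σ (q + q')) (σ q + σ q') (σ r) (σ r) (by rw [hσ, map_add, hσ, hσ]) rfl, hWadd1])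
    (fun c q r => by
      rw [hWπ (σ (c • q)) (c • σ q) (σ r) (σ r) (by rw [hσ, map_smul, hσ]) rfl, hWsmul1]; rfl)
    (fun q r r' => by
      rw [hWπ (σ q) (σ q) (σ (r + r')) (σ r + σ r') rfl (by rw [hσ, map_add, hσ, hσ]), hWadd2])
    (fun c q r => by
      rw [hWπ (σ q) (σ q) (σ (c • r)) (c • σ r) rfl (by rw [hσ, map_smul, hσ]), hWsmul2]; rfl)
    with hBdef
  have hBapp : ∀ q r : Q, B q r = W (σ q) (σ r) := fun q r => rfl
  have hBπ : ∀ (a b : A), B (π a) (π b) = W a b := by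
    intro a b
    rw [hBapp]
    exact hWπ _ _ _ _ (hσ _) (hσ _)
  -- norm bound for B via the quotient norm
  have hBbound : ∀ q r : Q, ‖B q r‖ ≤ 2 * ‖F‖ * ‖q‖ * ‖r‖ := by
    intro q r
    have hb : ∀ δ : ℝ, 0 < δ → ‖B q r‖ ≤ 2 * ‖F‖ * (‖q‖ + δ) * (‖r‖ + δ) := by
      intro δ hδ
      obtain ⟨a, ha, hna⟩ := hrep q δ hδ
      obtain ⟨b, hb, hnb⟩ := hrep r δ hδ
      rw [show B q r = W a b from by rw [← ha, ← hb, hBπ]]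
      have hqn : (0:ℝ) ≤ ‖q‖ + δ := by positivity
      have h6 : ‖a‖ * ‖b‖ ≤ (‖q‖ + δ) * (‖r‖ + δ) :=
        mul_le_mul hna.le hnb.le (norm_nonneg b) hqn
      calc ‖W a b‖ ≤ 2 * ‖F‖ * ‖a‖ * ‖b‖ := hWbound a b
        _ = 2 * ‖F‖ * (‖a‖ * ‖b‖) := by ring
        _ ≤ 2 * ‖F‖ * ((‖q‖ + δ) * (‖r‖ + δ)) :=
            mul_le_mul_of_nonneg_left h6 (by positivity)
        _ = 2 * ‖F‖ * (‖q‖ + δ) * (‖r‖ + δ) := by ring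
    have ht : Tendsto (fun δ : ℝ => 2 * ‖F‖ * (‖q‖ + δ) * (‖r‖ + δ)) (𝓝[>] (0:ℝ))
        (𝓝 (2 * ‖F‖ * ‖q‖ * ‖r‖)) := by
      have hc : Continuous (fun δ : ℝ => 2 * ‖F‖ * (‖q‖ + δ) * (‖r‖ + δ)) := by continuity
      have := (hc.tendsto 0).mono_left (nhdsWithin_le_nhds (s := Set.Ioi (0:ℝ)))
      simpa using this
    exact ge_of_tendsto ht (eventually_nhdsWithin_of_forall fun δ hδ => hb δ hδ)
  -- the derivation on Q
  set Dt : Q →L[ℂ] (Q →L[ℂ] ℂ) := LinearMap.mkContinuous₂ B (2 * ‖F‖) hBbound with hDtdef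
  have hDt : ∀ q r : Q, Dt q r = B q r := fun q r => rfl
  have hDtπ : ∀ a b : A, Dt (π a) (π b) = W a b := fun a b => by rw [hDt, hBπ]
  have hder : IsDerivation Dt := by
    intro q r
    ext s
    obtain ⟨a, ha⟩ := hsurj q
    obtain ⟨b, hb⟩ := hsurj r
    obtain ⟨c, hc⟩ := hsurj s
    have e1 : q * r = π (a * b) := by rw [hmul, ha, hb]
    have e2 : r * s = π (b * c) := by rw [hmul, hb, hc]
    have e3 : s * q = π (c * a) := by rw [hmul, hc, ha]
    rw [ContinuousLinearMap.add_apply]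
    show Dt (q * r) s = Dt q (r * s) + Dt r (s * q)
    rw [e1, e2, e3, ← ha, ← hb, ← hc, hDtπ, hDtπ, hDtπ]
    simp only [hW, mul_assoc]
    ring
  have hcyc : IsCyclicDeriv Dt := by
    intro q r
    obtain ⟨a, ha⟩ := hsurj q
    obtain ⟨b, hb⟩ := hsurj r
    rw [← ha, ← hb, hDtπ, hDtπ]
    simp only [hW]
    ring
  obtain ⟨ι, l, h, hne, hconv⟩ := hQ Dt hder hcyc
  -- build the approximating net in A*
  have hmem : ∀ i, ∀ x : ↥I, (F - (h i).comp π) (x : A) = f x := by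
    intro i x
    have hπx : π (x : A) = 0 := (hker _).mpr x.2
    simp [hπx, hF x]
  refine ⟨{φ : A →L[ℂ] ℂ // ∀ x : ↥I, φ (x : A) = f x}, Filter.map
    (fun i => (⟨F - (h i).comp π, hmem i⟩ : {φ : A →L[ℂ] ℂ // ∀ x : ↥I, φ (x : A) = f x})) l,
    Subtype.val, Filter.NeBot.map hne _, fun i x => i.2 x, ?_⟩
  · intro a
    rw [Filter.tendsto_map'_iff]
    have hgoal : ((fun φ : {φ : A →L[ℂ] ℂ // ∀ x : ↥I, φ (x : A) = f x} =>
        lAct a φ.1 - rAct φ.1 a) ∘ fun i => (⟨F - (h i).comp π, hmem i⟩ : {φ : A →L[ℂ] ℂ //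
          ∀ x : ↥I, φ (x : A) = f x})) =
        fun i => (Dt (π a) - (lAct (π a) (h i) - rAct (h i) (π a))).comp π := by
      funext i
      ext b
      simp only [Function.comp_apply, ContinuousLinearMap.coe_comp', Function.comp_apply,
        ContinuousLinearMap.sub_apply, lAct, rAct, ContinuousLinearMap.coe_comp',
        ContinuousLinearMap.flip_apply, ContinuousLinearMap.mul_apply']
      rw [hmul, hmul, hDtπ]
      simp only [hW]
      ring
    rw [hgoal]
    have h1 : Tendsto (fun i => Dt (π a) - (lAct (π a) (h i) - rAct (h i) (π a))) l
        (𝓝 0) := by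
      have := tendsto_const_nhds (x := Dt (π a)) (f := l) |>.sub (hconv (π a))
      simpa using this
    have h2 : Tendsto (fun i => ‖Dt (π a) - (lAct (π a) (h i) - rAct (h i) (π a))‖ * ‖π‖) l
        (𝓝 0) := by
      have := (h1.norm).mul_const ‖π‖
      simpa using this
    rw [tendsto_zero_iff_norm_tendsto_zero]
    refine squeeze_zero (fun i => norm_nonneg _) (fun i => ?_) h2
    exact ContinuousLinearMap.opNorm_comp_le _ _
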